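/- arXiv:2211.03475 — 2 statements merged into one kernel-verified Lean document; each statement's English description precedes it below -/
import Mathlib

section
/- Let P̃ be any probability distribution on X^n × Y^n supported on sequence pairs, let (X̃^n, Ỹ^n) ~ P̃, let T be uniform on {1,…,n} independent of everything else, and define the time-averaged marginal P̃_{X_T Y_T}(x,y) = (1/n)·Σ_{t=1}^n P̃_{X_t Y_t}(x,y). Then (1/n)·H(X̃^n, Ỹ^n) + (1/n)·D(P̃ ‖ P^{⊗n}) = H(X̃_T, Ỹ_T) + D(P̃_{X_T Y_T} ‖ P_{XY}), provided P̃ is absolutely continuous with respect to P^{⊗n}. -/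
open Finset

/-- Shannon entropy of a pmf on a finite type. -/
noncomputable def ent {α : Type*} [Fintype α] (p : α → ℝ) : ℝ :=
  -∑ a, p a * Real.log (p a)

/-- Kullback–Leibler divergence. -/
noncomputable def kl {α : Type*} [Fintype α] (p q : α → ℝ) : ℝ :=
  ∑ a, p a * Real.log (p a / q a)

/-- n-fold i.i.d. product pmf. -/
noncomputable def prodP {α : Type*} (n : ℕ) (p : α → ℝ) : (Fin n → α) → ℝ :=
  fun s => ∏ i, p (s i)

/-- Marginal of a pmf on sequences at coordinate `t`. -/
noncomputable def margAt {α : Type*} [Fintype α] [DecidableEq α] {n : ℕ}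
    (w : (Fin n → α) → ℝ) (t : Fin n) : α → ℝ :=
  fun a => ∑ s ∈ univ.filter (fun s : Fin n → α => s t = a), w s

/-- Time-averaged single-letter marginal `P̃_{X_T Y_T}`. -/
noncomputable def avgMarg {α : Type*} [Fintype α] [DecidableEq α] {n : ℕ}
    (w : (Fin n → α) → ℝ) : α → ℝ :=
  fun a => (1 / n : ℝ) * ∑ t : Fin n, margAt w t a

/-- Cross-entropy identity: `H(p) + D(p‖q) = -∑ p log q` under absolute continuity. -/
lemma cross {α : Type*} [Fintype α] (p q : α → ℝ) (habs : ∀ a, q a = 0 → p a = 0) :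
    ent p + kl p q = -∑ a, p a * Real.log (q a) := by
  unfold ent kl
  have h : ∀ a, p a * Real.log (p a / q a)
      = p a * Real.log (p a) - p a * Real.log (q a) := by
    intro a
    by_cases hp : p a = 0
    · simp [hp]
    · have hq : q a ≠ 0 := fun h => hp (habs a h)
      rw [Real.log_div hp hq]; ring
  rw [Finset.sum_congr rfl fun a _ => h a, Finset.sum_sub_distrib]
  ring

/-- for any pmf `P̃ ≪ P^{⊗n}` on sequences,
`(1/n)·H(P̃) + (1/n)·D(P̃‖P^{⊗n}) = H(P̃_{X_T Y_T}) + D(P̃_{X_T Y_T}‖P_{XY})`. -/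
theorem stmt1 {X Y : Type*} [Fintype X] [Fintype Y] [DecidableEq X] [DecidableEq Y]
    (n : ℕ) (hn : 0 < n)
    (P : X × Y → ℝ) (hP0 : ∀ a, 0 ≤ P a) (hP1 : ∑ a, P a = 1)
    (w : (Fin n → X × Y) → ℝ) (hw0 : ∀ s, 0 ≤ w s) (hw1 : ∑ s, w s = 1)
    (habs : ∀ s, prodP n P s = 0 → w s = 0) :
    (1 / n : ℝ) * ent w + (1 / n : ℝ) * kl w (prodP n P)
      = ent (avgMarg w) + kl (avgMarg w) P := by
  have hnR : (n : ℝ) ≠ 0 := Nat.cast_ne_zero.mpr hn.ne'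
  have havg0 : ∀ a, P a = 0 → avgMarg w a = 0 := by
    intro a ha
    unfold avgMarg
    rw [mul_eq_zero]; right
    refine Finset.sum_eq_zero fun t _ => ?_
    unfold margAt
    refine Finset.sum_eq_zero fun s hs => ?_
    rw [Finset.mem_filter] at hs
    refine habs s ?_
    exact Finset.prod_eq_zero (Finset.mem_univ t) (by rw [hs.2, ha])
  have hcw := cross w (prodP n P) habs
  have hca := cross (avgMarg w) P havg0
  have key : ∑ s, w s * Real.log (prodP n P s)
      = ∑ t : Fin n, ∑ a, margAt w t a * Real.log (P a) := by
    have step1 : ∑ s, w s * Real.log (prodP n P s)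
        = ∑ s, ∑ t : Fin n, w s * Real.log (P (s t)) := by
      refine Finset.sum_congr rfl fun s _ => ?_
      by_cases hws : w s = 0
      · simp [hws]
      · have hps : prodP n P s ≠ 0 := fun h => hws (habs s h)
        have hf : ∀ i ∈ (univ : Finset (Fin n)), P (s i) ≠ 0 := by
          intro i _
          exact fun h => hps (Finset.prod_eq_zero (Finset.mem_univ i) h)
        unfold prodP
        rw [Real.log_prod hf, Finset.mul_sum]
    rw [step1, Finset.sum_comm]
    refine Finset.sum_congr rfl fun t _ => ?_
    rw [← Finset.sum_fiberwise univ (fun s => s t) (fun s => w s * Real.log (P (s t)))]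
    refine Finset.sum_congr rfl fun a _ => ?_
    unfold margAt
    rw [Finset.sum_mul]
    refine Finset.sum_congr rfl fun s hs => ?_
    rw [Finset.mem_filter] at hs
    rw [hs.2]
  have avgsum : ∑ a, avgMarg w a * Real.log (P a)
      = (1 / n : ℝ) * ∑ t : Fin n, ∑ a, margAt w t a * Real.log (P a) := by
    unfold avgMarg
    rw [Finset.mul_sum]
    rw [show (∑ a, (1/(n:ℝ) * ∑ t : Fin n, margAt w t a) * Real.log (P a))
        = ∑ a, ∑ t : Fin n, 1/(n:ℝ) * (margAt w t a * Real.log (P a)) from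
      Finset.sum_congr rfl fun a _ => by
        rw [mul_assoc, Finset.sum_mul, Finset.mul_sum]]
    rw [Finset.sum_comm]
    simp [Finset.mul_sum]
  rw [← mul_add, hcw, hca, avgsum, key]
  ring
end

section
/- Let (V, W) be a pair of random variables with joint distribution P_{VW} on a finite space, and let g : V × W → {0,1} be a function such that g(V,W) = 0 almost surely under P_{VW}. Then the mutual information satisfies I(V; W) = D(P_{VW} ‖ P_V × P_W) ≥ log(1/[(P_V × P_W)(g = 0)]), where (P_V × P_W)(g=0) is the probability that g equals 0 under the product of the marginals. -/
open Finset

/-- if `g(V,W) = 0` almost surely under the joint pmf `p`, then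
`I(V;W) = D(p ‖ p_V × p_W) ≥ log(1/q)` where `q = (p_V × p_W)(g = 0)`. -/
theorem stmt8 {V W : Type*} [Fintype V] [Fintype W]
    (p : V × W → ℝ) (hp0 : ∀ a, 0 ≤ p a) (hp1 : ∑ a, p a = 1)
    (g : V × W → Fin 2)
    (hg : ∑ a ∈ univ.filter (fun a : V × W => g a = 0), p a = 1)
    (pV : V → ℝ) (hpV : ∀ v, pV v = ∑ w, p (v, w))
    (pW : W → ℝ) (hpW : ∀ w, pW w = ∑ v, p (v, w))
    (q : ℝ) (hq : q = ∑ a ∈ univ.filter (fun a : V × W => g a = 0), pV a.1 * pW a.2) :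
    ent pV + ent pW - ent p = kl p (fun a => pV a.1 * pW a.2)
    ∧ kl p (fun a => pV a.1 * pW a.2) ≥ Real.log (1 / q) := by
  classical
  have hle1 : ∀ a : V × W, p a ≤ pV a.1 := by
    intro a
    rw [hpV]
    have := Finset.single_le_sum (f := fun w => p (a.1, w))
      (fun w _ => hp0 _) (Finset.mem_univ a.2)
    simpa using this
  have hle2 : ∀ a : V × W, p a ≤ pW a.2 := by
    intro a
    rw [hpW]
    have := Finset.single_le_sum (f := fun v => p (v, a.2))
      (fun v _ => hp0 _) (Finset.mem_univ a.1)
    simpa using this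
  have hpVnn : ∀ v, 0 ≤ pV v := fun v => by
    rw [hpV]; exact Finset.sum_nonneg fun w _ => hp0 _
  have hpWnn : ∀ w, 0 ≤ pW w := fun w => by
    rw [hpW]; exact Finset.sum_nonneg fun v _ => hp0 _
  have key : ∀ a : V × W, p a * Real.log (p a / (pV a.1 * pW a.2))
      = p a * Real.log (p a) - p a * Real.log (pV a.1) - p a * Real.log (pW a.2) := by
    intro a
    rcases eq_or_lt_of_le (hp0 a) with h | h
    · simp [← h]
    · have h1 : 0 < pV a.1 := lt_of_lt_of_le h (hle1 a)
      have h2 : 0 < pW a.2 := lt_of_lt_of_le h (hle2 a)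
      rw [Real.log_div h.ne' (by positivity), Real.log_mul h1.ne' h2.ne']
      ring
  constructor
  · have e1 : ∑ a : V × W, p a * Real.log (pV a.1) = ∑ v, pV v * Real.log (pV v) := by
      rw [Fintype.sum_prod_type]
      refine Finset.sum_congr rfl fun v _ => ?_
      simp only
      rw [← Finset.sum_mul, ← hpV]
    have e2 : ∑ a : V × W, p a * Real.log (pW a.2) = ∑ w, pW w * Real.log (pW w) := by
      rw [Fintype.sum_prod_type_right]
      refine Finset.sum_congr rfl fun w _ => ?_
      simp only
      rw [← Finset.sum_mul, ← hpW]
    simp only [kl, ent, key, Finset.sum_sub_distrib, e1, e2]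
    ring
  · -- part 2
    set S := univ.filter (fun a : V × W => g a = 0) with hS
    have hpS : ∀ a ∈ Sᶜ, p a = 0 := by
      have hsum : ∑ a ∈ Sᶜ, p a = 0 := by
        have := Finset.sum_add_sum_compl S p
        rw [hg, hp1] at this
        linarith
      intro a ha
      exact (Finset.sum_eq_zero_iff_of_nonneg fun a _ => hp0 a).1 hsum a ha
    set T := S.filter (fun a => 0 < p a) with hT
    have hpT : ∑ a ∈ T, p a = 1 := by
      rw [hT, Finset.sum_filter_of_ne fun a _ h => (hp0 a).lt_of_ne (Ne.symm h), hg]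
    have hrT : ∀ a ∈ T, 0 < pV a.1 * pW a.2 := by
      intro a ha
      have hpa : 0 < p a := (Finset.mem_filter.1 ha).2
      have h1 : 0 < pV a.1 := lt_of_lt_of_le hpa (hle1 a)
      have h2 : 0 < pW a.2 := lt_of_lt_of_le hpa (hle2 a)
      positivity
    have hTne : T.Nonempty := by
      rcases Finset.eq_empty_or_nonempty T with h | h
      · rw [h] at hpT; simp at hpT
      · exact h
    have hrsum_pos : 0 < ∑ a ∈ T, pV a.1 * pW a.2 :=
      Finset.sum_pos hrT hTne
    have hrsum_le : ∑ a ∈ T, pV a.1 * pW a.2 ≤ q := by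
      rw [hq]
      refine Finset.sum_le_sum_of_subset_of_nonneg ?_ fun a _ _ => ?_
      · exact Finset.filter_subset _ _
      · exact mul_nonneg (hpVnn _) (hpWnn _)
    have hq_pos : 0 < q := lt_of_lt_of_le hrsum_pos hrsum_le
    -- Jensen
    have jensen := ConcaveOn.le_map_sum (f := Real.log) (s := Set.Ioi (0:ℝ))
      (t := T) (w := p) (p := fun a => (pV a.1 * pW a.2) / p a)
      strictConcaveOn_log_Ioi.concaveOn
      (fun a _ => hp0 a) hpT
      (fun a ha => by
        have hpa : 0 < p a := (Finset.mem_filter.1 ha).2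
        have := hrT a ha
        exact Set.mem_Ioi.2 (by positivity))
    have hsum_eq : ∑ a ∈ T, p a • ((pV a.1 * pW a.2) / p a) = ∑ a ∈ T, pV a.1 * pW a.2 := by
      refine Finset.sum_congr rfl fun a ha => ?_
      have hpa : 0 < p a := (Finset.mem_filter.1 ha).2
      rw [smul_eq_mul]
      field_simp
    rw [hsum_eq] at jensen
    have hkl : kl p (fun a => pV a.1 * pW a.2)
        = ∑ a ∈ T, p a * Real.log (p a / (pV a.1 * pW a.2)) := by
      rw [kl]
      refine (Finset.sum_subset (Finset.subset_univ T) fun a _ ha => ?_).symm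
      by_cases hSa : a ∈ S
      · have : ¬ 0 < p a := fun h => ha (Finset.mem_filter.2 ⟨hSa, h⟩)
        have : p a = 0 := le_antisymm (not_lt.1 this) (hp0 a)
        simp [this]
      · have : p a = 0 := hpS a (Finset.mem_compl.2 hSa)
        simp [this]
    have hflip : ∑ a ∈ T, p a * Real.log (p a / (pV a.1 * pW a.2))
        = -∑ a ∈ T, p a • Real.log ((pV a.1 * pW a.2) / p a) := by
      rw [← Finset.sum_neg_distrib]
      refine Finset.sum_congr rfl fun a ha => ?_
      have hpa : 0 < p a := (Finset.mem_filter.1 ha).2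
      have hr := hrT a ha
      rw [smul_eq_mul, Real.log_div hpa.ne' hr.ne', Real.log_div hr.ne' hpa.ne']
      ring
    have hlog_le : Real.log (∑ a ∈ T, pV a.1 * pW a.2) ≤ Real.log q :=
      Real.log_le_log hrsum_pos hrsum_le
    have : ∑ a ∈ T, p a • Real.log ((pV a.1 * pW a.2) / p a) ≤ Real.log q :=
      le_trans jensen hlog_le
    rw [hkl, hflip, ge_iff_le, Real.log_div one_ne_zero hq_pos.ne', Real.log_one]
    linarith
end
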